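/- arXiv:2210.03495 — 3 statements merged into one kernel-verified Lean document; each statement's English description precedes it below -/
import Mathlib

section
/- Let k₀ > 0, T > 0, and let R : [0,T] → SO(3) be a continuously differentiable family of rotation matrices. Define κ(k₁,k₂) := √(k₀² − k₁² − k₂²) for k₁² + k₂² ≤ k₀², and let 𝒴 := { R_t (k₁,k₂,κ(k₁,k₂)−k₀)ᵀ : k₁² + k₂² ≤ k₀², t ∈ [0,T] } ⊆ ℝ³. Suppose the Lebesgue measure of 𝒴 is positive. If f, g ∈ L¹(ℝ³) both have support contained in the closed ball {x ∈ ℝ³ : ‖x‖₂ ≤ r_M} and their Fourier transforms agree at every point of 𝒴, then f = g almost everywhere. -/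
open MeasureTheory Matrix

/-- The 3D Fourier transform `𝓕f(k) = (2π)^{-3/2} ∫ f(x) e^{-i x·k} dx`. -/
noncomputable def fourier3 (f : EuclideanSpace ℝ (Fin 3) → ℂ)
    (k : EuclideanSpace ℝ (Fin 3)) : ℂ :=
  (((2 * Real.pi) ^ (-(3 : ℝ) / 2) : ℝ) : ℂ) *
    ∫ x : EuclideanSpace ℝ (Fin 3), f x * Complex.exp (-Complex.I * ((inner ℝ x k : ℝ) : ℂ))

/-- Interpret a plain vector in `Fin 3 → ℝ` as a point of Euclidean space `ℝ³`. -/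
noncomputable def toE3 (v : Fin 3 → ℝ) : EuclideanSpace ℝ (Fin 3) :=
  (WithLp.equiv 2 (Fin 3 → ℝ)).symm v

open Complex FourierTransform RealInnerProductSpace
open scoped ContDiff



lemma analytic_line
    {h : EuclideanSpace ℝ (Fin 3) → ℂ} (hh : Integrable h) {r : ℝ}
    (hsupp : ∀ x, r < ‖x‖ → h x = 0) (a v : EuclideanSpace ℝ (Fin 3)) :
    AnalyticOnNhd ℝ
      (fun t : ℝ => ∫ x, h x * Complex.exp (-Complex.I * ((inner ℝ x (a + t • v) : ℝ) : ℂ)))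
      Set.univ := by
  set r' := max r 0 with hr'
  have hr'0 : 0 ≤ r' := le_max_right _ _
  set cA : EuclideanSpace ℝ (Fin 3) → ℂ := fun x => -Complex.I * ((inner ℝ x a : ℝ) : ℂ) with hcA
  set cV : EuclideanSpace ℝ (Fin 3) → ℂ := fun x => -Complex.I * ((inner ℝ x v : ℝ) : ℂ) with hcV
  set Φ : ℂ → ℂ := fun z => ∫ x, h x * Complex.exp (cA x + cV x * z) with hΦ
  have hcVcont : Continuous cV :=
    continuous_const.mul (Complex.continuous_ofReal.comp (continuous_id.inner continuous_const))
  have hcont : ∀ z : ℂ, Continuous (fun x : EuclideanSpace ℝ (Fin 3) =>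
      Complex.exp (cA x + cV x * z)) := by
    intro z
    apply Complex.continuous_exp.comp
    exact (continuous_const.mul (Complex.continuous_ofReal.comp
      (continuous_id.inner continuous_const))).add (hcVcont.mul continuous_const)
  have hmeas : ∀ z : ℂ, AEStronglyMeasurable
      (fun x => h x * Complex.exp (cA x + cV x * z)) volume :=
    fun z => hh.aestronglyMeasurable.mul (hcont z).aestronglyMeasurable
  have hxr : ∀ x, h x ≠ 0 → ‖x‖ ≤ r' := by
    intro x hx
    by_contra hc
    exact hx (hsupp x (lt_of_le_of_lt (le_max_left r 0) (not_le.1 hc)))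
  have hnexp : ∀ (z : ℂ) (x : EuclideanSpace ℝ (Fin 3)), h x ≠ 0 →
      ‖Complex.exp (cA x + cV x * z)‖ ≤ Real.exp (r' * ‖v‖ * ‖z‖) := by
    intro z x hx
    rw [Complex.norm_exp]
    apply Real.exp_le_exp.2
    have hre : (cA x + cV x * z).re = (inner ℝ x v : ℝ) * z.im := by
      simp [hcA, hcV, Complex.add_re, Complex.mul_re, Complex.mul_im]
    rw [hre]
    calc (inner ℝ x v : ℝ) * z.im ≤ |(inner ℝ x v : ℝ)| * |z.im| := by
          exact (le_abs_self _).trans (le_of_eq (abs_mul _ _))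
      _ ≤ (‖x‖ * ‖v‖) * ‖z‖ := by
          apply mul_le_mul (abs_real_inner_le_norm _ _)
            (Complex.abs_im_le_norm z) (abs_nonneg _)
          positivity
      _ ≤ r' * ‖v‖ * ‖z‖ := by
          rw [mul_assoc, mul_assoc]
          exact mul_le_mul_of_nonneg_right (hxr x hx)
            (mul_nonneg (norm_nonneg _) (norm_nonneg _))
  have hkey : ∀ (z : ℂ) (x : EuclideanSpace ℝ (Fin 3)),
      ‖h x * Complex.exp (cA x + cV x * z)‖ ≤ ‖h x‖ * Real.exp (r' * ‖v‖ * ‖z‖) := by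
    intro z x
    by_cases hx : h x = 0
    · simp [hx]
    · rw [norm_mul]
      exact mul_le_mul_of_nonneg_left (hnexp z x hx) (norm_nonneg _)
  have hcVn : ∀ x, h x ≠ 0 → ‖cV x‖ ≤ r' * ‖v‖ := by
    intro x hx
    rw [hcV]
    simp only [norm_mul, norm_neg, Complex.norm_I, one_mul, Complex.norm_real,
      Real.norm_eq_abs]
    exact (abs_real_inner_le_norm _ _).trans
      (mul_le_mul_of_nonneg_right (hxr x hx) (norm_nonneg _))
  have hΦdiff : Differentiable ℂ Φ := by
    intro z₀
    set C : ℝ := Real.exp (r' * ‖v‖ * (‖z₀‖ + 1)) * (r' * ‖v‖) with hC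
    have hbd : ∀ᵐ (x : EuclideanSpace ℝ (Fin 3)), ∀ z ∈ Metric.ball z₀ 1,
        ‖h x * (Complex.exp (cA x + cV x * z) * cV x)‖ ≤ ‖h x‖ * C := by
      apply Filter.Eventually.of_forall
      intro x z hz
      by_cases hx : h x = 0
      · simp only [hx, zero_mul, norm_zero, norm_mul]
        positivity
      · have hz' : ‖z‖ ≤ ‖z₀‖ + 1 := by
          have h1 := mem_ball_iff_norm.1 hz
          calc ‖z‖ = ‖z - z₀ + z₀‖ := by ring_nf
            _ ≤ ‖z - z₀‖ + ‖z₀‖ := norm_add_le _ _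
            _ ≤ ‖z₀‖ + 1 := by linarith
        rw [norm_mul, norm_mul, hC]
        gcongr
        · exact (hnexp z x hx).trans (Real.exp_le_exp.2
            (mul_le_mul_of_nonneg_left hz' (by positivity)))
        · exact hcVn x hx
    have key := hasDerivAt_integral_of_dominated_loc_of_deriv_le
      (μ := (volume : Measure (EuclideanSpace ℝ (Fin 3))))
      (F := fun z x => h x * Complex.exp (cA x + cV x * z))
      (F' := fun z x => h x * (Complex.exp (cA x + cV x * z) * cV x))
      (x₀ := z₀) (bound := fun x => ‖h x‖ * C) (s := Metric.ball z₀ 1) (Metric.ball_mem_nhds z₀ one_pos)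
      (Filter.Eventually.of_forall hmeas)
      ((hh.norm.mul_const (Real.exp (r' * ‖v‖ * ‖z₀‖))).mono' (hmeas z₀)
        (Filter.Eventually.of_forall (hkey z₀)))
      (hh.aestronglyMeasurable.mul ((hcont z₀).mul hcVcont).aestronglyMeasurable)
      hbd (hh.norm.mul_const C)
      (Filter.Eventually.of_forall (fun x z _hz => by
        simpa using ((((hasDerivAt_id z).const_mul (cV x)).const_add (cA x)).cexp).const_mul (h x)))
    exact key.2.differentiableAt
  -- pass to the real line
  have hΦan : AnalyticOnNhd ℂ Φ Set.univ :=
    hΦdiff.differentiableOn.analyticOnNhd isOpen_univ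
  have hcomp : AnalyticOnNhd ℝ (fun t : ℝ => Φ (t : ℂ)) Set.univ := by
    apply (hΦan.restrictScalars (𝕜 := ℝ)).comp
      (fun t _ => Complex.ofRealCLM.analyticAt t) (Set.mapsTo_univ _ _)
  have heq : (fun t : ℝ => ∫ x, h x * Complex.exp (-Complex.I * ((inner ℝ x (a + t • v) : ℝ) : ℂ)))
      = fun t : ℝ => Φ (t : ℂ) := by
    funext t
    rw [hΦ]
    congr 1
    funext x
    congr 1
    rw [hcA, hcV]
    rw [inner_add_right, real_inner_smul_right]
    push_cast
    ring
  rw [heq]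
  exact hcomp


lemma analytic_vanish {φ : ℝ → ℂ} (hφ : AnalyticOnNhd ℝ φ Set.univ)
    {s : Set ℝ} (hs : volume s ≠ 0) (h0 : ∀ t ∈ s, φ t = 0) (t : ℝ) : φ t = 0 := by
  obtain ⟨n, hn⟩ : ∃ n : ℕ, volume (s ∩ Set.Icc (-(n : ℝ)) n) ≠ 0 := by
    by_contra hc
    push_neg at hc
    apply hs
    have hcover : s = ⋃ n : ℕ, s ∩ Set.Icc (-(n : ℝ)) n := by
      ext x
      simp only [Set.mem_iUnion, Set.mem_inter_iff, Set.mem_Icc]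
      constructor
      · intro hx
        obtain ⟨n, hn⟩ := exists_nat_ge |x|
        exact ⟨n, hx, by cases abs_le.1 hn; constructor <;> linarith⟩
      · rintro ⟨n, hn, -⟩
        exact hn
    rw [hcover]
    exact le_antisymm ((measure_iUnion_le _).trans (by simp [hc])) zero_le
  have hinf : (s ∩ Set.Icc (-(n : ℝ)) n).Infinite := by
    intro hfin
    exact hn (hfin.countable.measure_zero _)
  obtain ⟨x₀, -, hacc⟩ :=
    hinf.exists_accPt_of_subset_isCompact isCompact_Icc Set.inter_subset_right
  have hfreq : ∃ᶠ z in nhdsWithin x₀ {x₀}ᶜ, φ z = 0 := by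
    rw [frequently_nhdsWithin_iff]
    refine (accPt_iff_frequently.1 hacc).mono ?_
    rintro z ⟨hz1, hz2, -⟩
    exact ⟨h0 z hz2, hz1⟩
  have := hφ.eqOn_zero_of_preconnected_of_frequently_eq_zero isPreconnected_univ
    (Set.mem_univ x₀) hfreq (Set.mem_univ t)
  simpa using this



noncomputable def e3 : EuclideanSpace ℝ (Fin 3) ≃ᵐ ℝ × ℝ × ℝ :=
  (MeasurableEquiv.toLp 2 (Fin 3 → ℝ)).symm.trans <|
    (MeasurableEquiv.piFinSuccAbove (fun _ : Fin 3 => ℝ) 0).trans <|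
      (MeasurableEquiv.refl ℝ).prodCongr <|
        (MeasurableEquiv.piFinSuccAbove (fun _ : Fin 2 => ℝ) 0).trans <|
          (MeasurableEquiv.refl ℝ).prodCongr (MeasurableEquiv.funUnique (Fin 1) ℝ)

lemma e3_mp : MeasurePreserving e3 volume volume := by
  have h0 := EuclideanSpace.volume_preserving_symm_measurableEquiv_toLp (Fin 3)
  have h1 := volume_preserving_piFinSuccAbove (fun _ : Fin 3 => ℝ) 0
  have h2 := volume_preserving_piFinSuccAbove (fun _ : Fin 2 => ℝ) 0
  have h3 := volume_preserving_funUnique (Fin 1) ℝ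
  have h4 : MeasurePreserving
      (⇑((MeasurableEquiv.refl ℝ).prodCongr (MeasurableEquiv.funUnique (Fin 1) ℝ)))
      volume volume := by
    have := (MeasurePreserving.id (volume : Measure ℝ)).prod h3
    rw [← Measure.volume_eq_prod, ← Measure.volume_eq_prod] at this
    exact this
  have h5 : MeasurePreserving
      (⇑(((MeasurableEquiv.piFinSuccAbove (fun _ : Fin 2 => ℝ) 0)).trans
        ((MeasurableEquiv.refl ℝ).prodCongr (MeasurableEquiv.funUnique (Fin 1) ℝ))))
      volume volume := h4.comp h2
  have h6 : MeasurePreserving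
      (⇑((MeasurableEquiv.refl ℝ).prodCongr
        (((MeasurableEquiv.piFinSuccAbove (fun _ : Fin 2 => ℝ) 0)).trans
          ((MeasurableEquiv.refl ℝ).prodCongr (MeasurableEquiv.funUnique (Fin 1) ℝ)))))
      volume volume := by
    have := (MeasurePreserving.id (volume : Measure ℝ)).prod h5
    rw [← Measure.volume_eq_prod, ← Measure.volume_eq_prod] at this
    exact this
  exact (h6.comp h1).comp h0

lemma e3_symm (p : ℝ × ℝ × ℝ) : e3.symm p = toE3 ![p.1, p.2.1, p.2.2] := by
  have : e3 (toE3 ![p.1, p.2.1, p.2.2]) = p := by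
    simp [e3, toE3, MeasurableEquiv.trans_apply, MeasurableEquiv.prodCongr,
      MeasurableEquiv.piFinSuccAbove, MeasurableEquiv.funUnique, MeasurableEquiv.toLp,
      Matrix.tail_cons]
    rfl
  conv_lhs => rw [← this]
  rw [MeasurableEquiv.symm_apply_apply]

lemma toE3_decomp1 (t y z : ℝ) : toE3 ![t, y, z] = toE3 ![0, y, z] + t • toE3 ![1, 0, 0] := by
  ext i
  fin_cases i <;>
    simp [toE3, PiLp.add_apply, PiLp.smul_apply, WithLp.equiv_symm_apply, PiLp.toLp_apply]

lemma toE3_decomp2 (t y z : ℝ) : toE3 ![t, y, z] = toE3 ![t, 0, z] + y • toE3 ![0, 1, 0] := by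
  ext i
  fin_cases i <;>
    simp [toE3, PiLp.add_apply, PiLp.smul_apply, WithLp.equiv_symm_apply, PiLp.toLp_apply]

lemma toE3_decomp3 (t y z : ℝ) : toE3 ![t, y, z] = toE3 ![t, y, 0] + z • toE3 ![0, 0, 1] := by
  ext i
  fin_cases i <;>
    simp [toE3, PiLp.add_apply, PiLp.smul_apply, WithLp.equiv_symm_apply, PiLp.toLp_apply]

lemma toE3_self (k : EuclideanSpace ℝ (Fin 3)) : toE3 ![k 0, k 1, k 2] = k := by
  ext i
  fin_cases i <;> simp [toE3, WithLp.equiv_symm_apply, PiLp.toLp_apply]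


lemma fourier_inj {h : EuclideanSpace ℝ (Fin 3) → ℂ} (hh : Integrable h)
    (h0 : ∀ k, (∫ x, h x * Complex.exp (-Complex.I * ((inner ℝ x k : ℝ) : ℂ))) = 0) :
    h =ᵐ[volume] 0 := by
  have h𝓕 : ∀ w, 𝓕 h w = 0 := by
    intro w
    rw [Real.fourier_eq']
    rw [← h0 ((2 * Real.pi) • w)]
    congr 1
    funext v
    rw [smul_eq_mul, real_inner_smul_right, mul_comm]
    congr 1
    push_cast
    ring
  have hloc : LocallyIntegrable h volume := hh.locallyIntegrable
  apply ae_eq_zero_of_integral_contDiff_smul_eq_zero hloc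
  intro gq hgq hgqsupp
  set gc : EuclideanSpace ℝ (Fin 3) → ℂ := fun x => (gq x : ℂ) with hgc
  have hgc_smooth : ContDiff ℝ ∞ gc := Complex.ofRealCLM.contDiff.comp hgq
  have hgc_supp : HasCompactSupport gc := by
    exact HasCompactSupport.comp_left (g := Complex.ofReal) hgqsupp Complex.ofReal_zero
  set gS : SchwartzMap (EuclideanSpace ℝ (Fin 3)) ℂ :=
    { toFun := gc
      smooth' := hgc_smooth
      decay' := by
        intro k n
        have hcont : Continuous fun x : EuclideanSpace ℝ (Fin 3) =>
            ‖x‖ ^ k * ‖iteratedFDeriv ℝ n gc x‖ :=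
          ((continuous_norm.pow k)).mul
            ((hgc_smooth.continuous_iteratedFDeriv (mod_cast le_top)).norm)
        have hcs : HasCompactSupport fun x : EuclideanSpace ℝ (Fin 3) =>
            ‖x‖ ^ k * ‖iteratedFDeriv ℝ n gc x‖ :=
          ((hgc_supp.iteratedFDeriv n).norm).mul_left
        obtain ⟨C, hC⟩ := hcont.bounded_above_of_compact_support hcs
        exact ⟨C, fun x => le_trans (le_abs_self _)
          (by rw [← Real.norm_eq_abs]; exact hC x)⟩ } with hgS
  set ψ := (FourierTransform.fourierCLE ℝ (SchwartzMap (EuclideanSpace ℝ (Fin 3)) ℂ)).symm gS with hψdef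
  have hψ : 𝓕 (⇑ψ) = ⇑gS := by
    rw [← SchwartzMap.fourier_coe, ← FourierTransform.fourierCLE_apply (R := ℝ)]
    rw [(FourierTransform.fourierCLE ℝ (SchwartzMap (EuclideanSpace ℝ (Fin 3)) ℂ)).apply_symm_apply gS]
  have hmul := VectorFourier.integral_fourierIntegral_smul_eq_flip (e := Real.fourierChar)
    (μ := (volume : Measure (EuclideanSpace ℝ (Fin 3)))) (ν := (volume : Measure (EuclideanSpace ℝ (Fin 3))))
    (L := innerₗ (EuclideanSpace ℝ (Fin 3))) Real.continuous_fourierChar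
    continuous_inner ψ.integrable hh
  rw [flip_innerₗ] at hmul
  have hL : (fun ξ => VectorFourier.fourierIntegral 𝐞 volume
      (innerₗ (EuclideanSpace ℝ (Fin 3))) (⇑ψ) ξ • h ξ) = fun ξ => gq ξ • h ξ := by
    funext ξ
    have : VectorFourier.fourierIntegral 𝐞 volume (innerₗ (EuclideanSpace ℝ (Fin 3))) (⇑ψ) ξ
        = gc ξ := by
      rw [show VectorFourier.fourierIntegral 𝐞 volume (innerₗ (EuclideanSpace ℝ (Fin 3))) (⇑ψ) ξ
          = 𝓕 (⇑ψ) ξ from rfl, hψ]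
      rfl
    rw [this, hgc, smul_eq_mul, ← Complex.real_smul]
  have hR : (fun x => ψ x • VectorFourier.fourierIntegral 𝐞 volume
      (innerₗ (EuclideanSpace ℝ (Fin 3))) h x) = fun _ => (0 : ℂ) := by
    funext x
    rw [show VectorFourier.fourierIntegral 𝐞 volume (innerₗ (EuclideanSpace ℝ (Fin 3))) h x
        = 𝓕 h x from rfl, h𝓕 x, smul_zero]
  rw [hL, hR] at hmul
  simpa using hmul


lemma main_aux {h : EuclideanSpace ℝ (Fin 3) → ℂ} (hh : Integrable h) {r : ℝ}
    (hsupp : ∀ x, r < ‖x‖ → h x = 0)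
    {Y : Set (EuclideanSpace ℝ (Fin 3))} (hYvol : volume Y ≠ 0)
    (hY0 : ∀ y ∈ Y, (∫ x, h x * Complex.exp (-Complex.I * ((inner ℝ x y : ℝ) : ℂ))) = 0) :
    h =ᵐ[volume] 0 := by
  classical
  set F : EuclideanSpace ℝ (Fin 3) → ℂ :=
    fun k => ∫ x, h x * Complex.exp (-Complex.I * ((inner ℝ x k : ℝ) : ℂ)) with hFdef
  have hexpcont : ∀ k : EuclideanSpace ℝ (Fin 3), Continuous fun x : EuclideanSpace ℝ (Fin 3) =>
      Complex.exp (-Complex.I * ((inner ℝ x k : ℝ) : ℂ)) := fun k =>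
    Complex.continuous_exp.comp (continuous_const.mul
      (Complex.continuous_ofReal.comp (continuous_id.inner continuous_const)))
  have hexp1 : ∀ (k : EuclideanSpace ℝ (Fin 3)) x,
      ‖Complex.exp (-Complex.I * ((inner ℝ x k : ℝ) : ℂ))‖ = 1 := by
    intro k x
    rw [Complex.norm_exp]
    norm_num [Complex.mul_re]
  have hFcont : Continuous F := by
    rw [hFdef]
    apply continuous_of_dominated (bound := fun x => ‖h x‖)
    · exact fun k => hh.aestronglyMeasurable.mul (hexpcont k).aestronglyMeasurable
    · exact fun k => Filter.Eventually.of_forall fun x => by rw [norm_mul, hexp1, mul_one]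
    · exact hh.norm
    · apply Filter.Eventually.of_forall
      intro x
      exact continuous_const.mul (Complex.continuous_exp.comp (continuous_const.mul
        (Complex.continuous_ofReal.comp (continuous_const.inner continuous_id))))
  set Z : Set (EuclideanSpace ℝ (Fin 3)) := {k | F k = 0} with hZdef
  have hZm : MeasurableSet Z := (isClosed_eq hFcont continuous_const).measurableSet
  have hZvol : volume Z ≠ 0 := by
    intro hc
    exact hYvol (measure_mono_null (fun y hy => hY0 y hy) hc)
  set G : ℝ × ℝ × ℝ → ℂ := fun p => F (toE3 ![p.1, p.2.1, p.2.2]) with hGdef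
  set S : Set (ℝ × ℝ × ℝ) := {p | G p = 0} with hSdef
  have hpre : e3.symm ⁻¹' Z = S := by
    ext p
    simp only [Set.mem_preimage, hZdef, Set.mem_setOf_eq, hSdef, hGdef, e3_symm p]
  have hSm : MeasurableSet S := by
    rw [← hpre]
    exact e3.symm.measurable hZm
  have hSvol : volume S ≠ 0 := by
    rw [← hpre, (e3_mp.symm e3).measure_preimage hZm.nullMeasurableSet]
    exact hZvol
  -- analyticity of G along each coordinate line
  have hGan1 : ∀ y z : ℝ, AnalyticOnNhd ℝ (fun t => G (t, y, z)) Set.univ := by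
    intro y z
    have heq : (fun t : ℝ => G (t, y, z)) = fun t : ℝ =>
        ∫ x, h x * Complex.exp
          (-Complex.I * ((inner ℝ x (toE3 ![0, y, z] + t • toE3 ![1, 0, 0]) : ℝ) : ℂ)) := by
      funext t
      simp only [hGdef, hFdef]
      rw [toE3_decomp1 t y z]
    rw [heq]
    exact analytic_line hh hsupp _ _
  have hGan2 : ∀ x z : ℝ, AnalyticOnNhd ℝ (fun y => G (x, y, z)) Set.univ := by
    intro x z
    have heq : (fun y : ℝ => G (x, y, z)) = fun y : ℝ =>
        ∫ x', h x' * Complex.exp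
          (-Complex.I * ((inner ℝ x' (toE3 ![x, 0, z] + y • toE3 ![0, 1, 0]) : ℝ) : ℂ)) := by
      funext y
      simp only [hGdef, hFdef]
      rw [toE3_decomp2 x y z]
    rw [heq]
    exact analytic_line hh hsupp _ _
  have hGan3 : ∀ x y : ℝ, AnalyticOnNhd ℝ (fun z => G (x, y, z)) Set.univ := by
    intro x y
    have heq : (fun z : ℝ => G (x, y, z)) = fun z : ℝ =>
        ∫ x', h x' * Complex.exp
          (-Complex.I * ((inner ℝ x' (toE3 ![x, y, 0] + z • toE3 ![0, 0, 1]) : ℝ) : ℂ)) := by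
      funext z
      simp only [hGdef, hFdef]
      rw [toE3_decomp3 x y z]
    rw [heq]
    exact analytic_line hh hsupp _ _
  -- Fubini slicing
  set A : Set ℝ := {x | volume (Prod.mk x ⁻¹' S) ≠ 0} with hAdef
  have hAvol : volume A ≠ 0 := by
    intro hc
    apply hSvol
    rw [Measure.volume_eq_prod, Measure.measure_prod_null hSm]
    have hae : ∀ᵐ x : ℝ, volume (Prod.mk x ⁻¹' S) = 0 := by
      rw [ae_iff]
      simpa [hAdef] using hc
    exact hae.mono fun x hx => by simpa using hx
  have step2 : ∀ x : ℝ, volume (Prod.mk x ⁻¹' S) ≠ 0 → ∀ y z : ℝ, G (x, y, z) = 0 := by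
    intro x hx y z
    set Sx : Set (ℝ × ℝ) := Prod.mk x ⁻¹' S with hSxdef
    have hSxm : MeasurableSet Sx := hSm.preimage measurable_prodMk_left
    set Bx : Set ℝ := {y | volume (Prod.mk y ⁻¹' Sx) ≠ 0} with hBxdef
    have hBxvol : volume Bx ≠ 0 := by
      intro hc
      apply hx
      rw [Measure.volume_eq_prod, Measure.measure_prod_null hSxm]
      have hae : ∀ᵐ y : ℝ, volume (Prod.mk y ⁻¹' Sx) = 0 := by
        rw [ae_iff]
        simpa [hBxdef] using hc
      exact hae.mono fun y hy => by simpa using hy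
    have hinner : ∀ y' ∈ Bx, ∀ z' : ℝ, G (x, y', z') = 0 := by
      intro y' hy' z'
      apply analytic_vanish (hGan3 x y') (s := Prod.mk y' ⁻¹' Sx) hy'
      intro t ht
      exact ht
    apply analytic_vanish (hGan2 x z) (s := Bx) hBxvol
    intro y' hy'
    exact hinner y' hy' z
  have hG0 : ∀ p : ℝ × ℝ × ℝ, G p = 0 := by
    rintro ⟨x, y, z⟩
    apply analytic_vanish (hGan1 y z) (s := A) hAvol
    intro x' hx'
    exact step2 x' hx' y z
  have hF0 : ∀ k, F k = 0 := by
    intro k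
    have := hG0 (k 0, k 1, k 2)
    simpa only [hGdef, toE3_self k] using this
  exact fourier_inj hh fun k => hF0 k


theorem stmt1 (k₀ T rM : ℝ) (hk₀ : 0 < k₀) (hT : 0 < T)
    (R : ℝ → Matrix (Fin 3) (Fin 3) ℝ)
    -- each `R t` is a rotation matrix (element of SO(3))
    (hRrot : ∀ t ∈ Set.Icc (0 : ℝ) T, (R t)ᵀ * R t = 1 ∧ (R t).det = 1)
    -- the family is continuously differentiable in `t`
    (hRdiff : ∀ i j, ContDiffOn ℝ 1 (fun t => R t i j) (Set.Icc (0 : ℝ) T))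
    (Y : Set (EuclideanSpace ℝ (Fin 3)))
    (hY : Y = {y | ∃ t ∈ Set.Icc (0 : ℝ) T, ∃ k₁ k₂ : ℝ, k₁ ^ 2 + k₂ ^ 2 ≤ k₀ ^ 2 ∧
      y = toE3 (R t *ᵥ ![k₁, k₂, Real.sqrt (k₀ ^ 2 - k₁ ^ 2 - k₂ ^ 2) - k₀])})
    (hYpos : 0 < volume Y)
    (f g : EuclideanSpace ℝ (Fin 3) → ℂ)
    (hf : Integrable f) (hg : Integrable g)
    (hfsupp : Function.support f ⊆ Metric.closedBall 0 rM)
    (hgsupp : Function.support g ⊆ Metric.closedBall 0 rM)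
    (hagree : ∀ y ∈ Y, fourier3 f y = fourier3 g y) :
    f =ᵐ[volume] g := by
  classical
  set h : EuclideanSpace ℝ (Fin 3) → ℂ := fun x => f x - g x with hhdef
  have hh : Integrable h := hf.sub hg
  have hsupp : ∀ x, max rM 0 < ‖x‖ → h x = 0 := by
    intro x hx
    have hxb : x ∉ Metric.closedBall (0 : EuclideanSpace ℝ (Fin 3)) rM := by
      simp only [Metric.mem_closedBall, dist_zero_right]
      intro hc
      exact absurd hc (not_le.2 (lt_of_le_of_lt (le_max_left rM 0) hx))
    have h1 : f x = 0 := by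
      by_contra hc
      exact hxb (hfsupp (Function.mem_support.2 hc))
    have h2 : g x = 0 := by
      by_contra hc
      exact hxb (hgsupp (Function.mem_support.2 hc))
    simp [hhdef, h1, h2]
  have hexpcont : ∀ k : EuclideanSpace ℝ (Fin 3), Continuous fun x : EuclideanSpace ℝ (Fin 3) =>
      Complex.exp (-Complex.I * ((inner ℝ x k : ℝ) : ℂ)) := fun k =>
    Complex.continuous_exp.comp (continuous_const.mul
      (Complex.continuous_ofReal.comp (continuous_id.inner continuous_const)))
  have hexp1 : ∀ (k : EuclideanSpace ℝ (Fin 3)) x,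
      ‖Complex.exp (-Complex.I * ((inner ℝ x k : ℝ) : ℂ))‖ = 1 := by
    intro k x
    rw [Complex.norm_exp]
    norm_num [Complex.mul_re]
  have hint : ∀ (φ : EuclideanSpace ℝ (Fin 3) → ℂ), Integrable φ →
      ∀ k, Integrable fun x => φ x * Complex.exp (-Complex.I * ((inner ℝ x k : ℝ) : ℂ)) := by
    intro φ hφ k
    refine hφ.norm.mono' (hφ.aestronglyMeasurable.mul (hexpcont k).aestronglyMeasurable)
      (Filter.Eventually.of_forall fun x => ?_)
    rw [norm_mul, hexp1, mul_one]
  have hc2π : (((2 * Real.pi) ^ (-(3 : ℝ) / 2) : ℝ) : ℂ) ≠ 0 := by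
    rw [Complex.ofReal_ne_zero]
    exact (Real.rpow_pos_of_pos (by positivity) _).ne'
  have hY0 : ∀ y ∈ Y, (∫ x, h x * Complex.exp (-Complex.I * ((inner ℝ x y : ℝ) : ℂ))) = 0 := by
    intro y hy
    have hag := hagree y hy
    unfold fourier3 at hag
    have h2 := mul_left_cancel₀ hc2π hag
    have heq : (fun x => h x * Complex.exp (-Complex.I * ((inner ℝ x y : ℝ) : ℂ)))
        = fun x => f x * Complex.exp (-Complex.I * ((inner ℝ x y : ℝ) : ℂ))
          - g x * Complex.exp (-Complex.I * ((inner ℝ x y : ℝ) : ℂ)) := by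
      funext x
      simp only [hhdef]
      ring
    rw [heq, integral_sub (hint f hf y) (hint g hg y), h2, sub_self]
  have hae : h =ᵐ[volume] 0 := main_aux hh hsupp hYpos.ne' hY0
  filter_upwards [hae] with x hx
  have hx' : f x - g x = 0 := hx
  exact sub_eq_zero.1 hx'
end

section
/- (Area formula with multiplicity / Banach indicatrix.) Let n ≥ 1, let U ⊆ ℝⁿ be an open set, and let Φ : ℝⁿ → ℝⁿ be continuously differentiable on U. Then for every measurable function g : ℝⁿ → [0,∞], ∫_U g(Φ(z)) · |det DΦ(z)| dz = ∫_{ℝⁿ} g(y) · N(y) dy, where DΦ(z) is the Jacobian matrix of Φ at z and N(y) denotes the number of points in the preimage Φ⁻¹({y}) ∩ U (as a value in [0,∞], equal to ∞ if the preimage is infinite). -/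
open MeasureTheory ENNReal

theorem stmt8 (n : ℕ) (hn : 1 ≤ n)
    (U : Set (EuclideanSpace ℝ (Fin n))) (hU : IsOpen U)
    (Φ : EuclideanSpace ℝ (Fin n) → EuclideanSpace ℝ (Fin n))
    (hΦ : ContDiffOn ℝ 1 Φ U)
    (g : EuclideanSpace ℝ (Fin n) → ℝ≥0∞) (hg : Measurable g) :
    ∫⁻ z in U, g (Φ z) * ENNReal.ofReal |(fderiv ℝ Φ z).det| =
      ∫⁻ y, g y * ((Φ ⁻¹' {y} ∩ U).encard : ℝ≥0∞) := by
  classical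
  have hΦdiff : ∀ x ∈ U, HasFDerivAt Φ (fderiv ℝ Φ x) x := by
    intro x hx
    exact ((hΦ.differentiableOn one_ne_zero).differentiableAt (hU.mem_nhds hx)).hasFDerivAt
  set A : Set (EuclideanSpace ℝ (Fin n)) := {x | x ∈ U ∧ (fderiv ℝ Φ x).det ≠ 0} with hA
  have hAsub : A ⊆ U := fun x hx => hx.1
  have hAopen : IsOpen A := by
    have hcont : ContinuousOn (fun x => (fderiv ℝ Φ x).det) U :=
      ContinuousLinearMap.continuous_det.comp_continuousOn
        (hΦ.continuousOn_fderiv_of_isOpen hU le_rfl)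
    have heq : A = U ∩ (fun x => (fderiv ℝ Φ x).det) ⁻¹' ({0}ᶜ) := by
      ext x; simp [hA]
    rw [heq]
    exact hcont.isOpen_inter_preimage hU isOpen_compl_singleton
  -- Step 1: the integral over U equals the integral over A
  have hUsplit : ∫⁻ z in U, g (Φ z) * ENNReal.ofReal |(fderiv ℝ Φ z).det| =
      ∫⁻ z in A, g (Φ z) * ENNReal.ofReal |(fderiv ℝ Φ z).det| := by
    have hmeas : MeasurableSet (U \ A) := hU.measurableSet.diff hAopen.measurableSet
    have hzero : ∫⁻ z in U \ A, g (Φ z) * ENNReal.ofReal |(fderiv ℝ Φ z).det| = 0 := by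
      rw [setLIntegral_congr_fun hmeas (fun z hz => ?_), lintegral_zero]
      have hdet : (fderiv ℝ Φ z).det = 0 := by
        by_contra h; exact hz.2 ⟨hz.1, h⟩
      simp [hdet]
    conv_lhs => rw [← Set.union_diff_cancel hAsub]
    rw [lintegral_union hmeas Set.disjoint_sdiff_right, hzero, add_zero]
  -- Step 2: the image of U \ A is null (Sard-type lemma)
  have hZim : volume (Φ '' (U \ A)) = 0 := by
    apply addHaar_image_eq_zero_of_det_fderivWithin_eq_zero volume
      (f' := fun x => fderiv ℝ Φ x)
    · intro x hx; exact (hΦdiff x hx.1).hasFDerivWithinAt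
    · intro x hx; by_contra h; exact hx.2 ⟨hx.1, h⟩
  have hae : ∀ᵐ y, g y * ((Φ ⁻¹' {y} ∩ U).encard : ℝ≥0∞) =
      g y * ((Φ ⁻¹' {y} ∩ A).encard : ℝ≥0∞) := by
    filter_upwards [measure_eq_zero_iff_ae_notMem.mp hZim] with y hy
    have hset : Φ ⁻¹' {y} ∩ U = Φ ⁻¹' {y} ∩ A := by
      ext z
      refine ⟨fun hz => ⟨hz.1, ?_⟩, fun hz => ⟨hz.1, hAsub hz.2⟩⟩
      by_contra h
      exact hy ⟨z, ⟨hz.2, fun h' => h h'⟩, hz.1⟩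
    rw [hset]
  rw [hUsplit, lintegral_congr_ae hae]
  -- Step 3: main argument on A
  rcases A.eq_empty_or_nonempty with hAe | hAne
  · rw [hAe]; simp
  -- inverse function theorem: local injectivity around each point of A
  have key : ∀ x, x ∈ A → ∃ s : Set (EuclideanSpace ℝ (Fin n)), IsOpen s ∧ x ∈ s ∧ s ⊆ A ∧ Set.InjOn Φ s := by
    intro x hx
    have hcd : ContDiffAt ℝ 1 Φ x := hΦ.contDiffAt (hU.mem_nhds (hAsub hx))
    have hstrict : HasStrictFDerivAt Φ (fderiv ℝ Φ x) x := hcd.hasStrictFDerivAt one_ne_zero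
    set e := (fderiv ℝ Φ x).toContinuousLinearEquivOfDetNeZero hx.2 with he
    have hs' : HasStrictFDerivAt Φ (e : EuclideanSpace ℝ (Fin n) →L[ℝ] EuclideanSpace ℝ (Fin n)) x := by
      rwa [ContinuousLinearMap.coe_toContinuousLinearEquivOfDetNeZero]
    have hinj : Set.InjOn Φ (HasStrictFDerivAt.toOpenPartialHomeomorph Φ hs').source := by
      have h := (HasStrictFDerivAt.toOpenPartialHomeomorph Φ hs').injOn
      rwa [HasStrictFDerivAt.toOpenPartialHomeomorph_coe] at h
    exact ⟨(HasStrictFDerivAt.toOpenPartialHomeomorph Φ hs').source ∩ A,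
      (HasStrictFDerivAt.toOpenPartialHomeomorph Φ hs').open_source.inter hAopen,
      ⟨HasStrictFDerivAt.mem_toOpenPartialHomeomorph_source hs', hx⟩, Set.inter_subset_right,
      hinj.mono Set.inter_subset_left⟩
  choose! s hso hsx hsA hsinj using key
  -- countable subcover
  obtain ⟨T, hTc, hTU⟩ := TopologicalSpace.isOpen_iUnion_countable
    (fun x : A => s x) (fun x => hso x x.2)
  have hTne : T.Nonempty := by
    rcases Set.eq_empty_or_nonempty T with h | h
    · exfalso
      obtain ⟨x, hx⟩ := hAne
      have : (x : EuclideanSpace ℝ (Fin n)) ∈ ⋃ i : A, s i := Set.mem_iUnion.2 ⟨⟨x, hx⟩, hsx x hx⟩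
      rw [← hTU, h] at this
      simpa using this
    · exact h
  obtain ⟨f, hf⟩ := hTc.exists_eq_range hTne
  set V : ℕ → Set (EuclideanSpace ℝ (Fin n)) := fun k => s (f k) with hV
  have hVopen : ∀ k, IsOpen (V k) := fun k => hso (f k) (f k).2
  have hVA : ∀ k, V k ⊆ A := fun k => hsA (f k) (f k).2
  have hVinj : ∀ k, Set.InjOn Φ (V k) := fun k => hsinj (f k) (f k).2
  have hVU : ⋃ k, V k = A := by
    apply Set.Subset.antisymm
    · exact Set.iUnion_subset fun k => hVA k
    · intro x hx
      have : (x : EuclideanSpace ℝ (Fin n)) ∈ ⋃ i : A, s i := Set.mem_iUnion.2 ⟨⟨x, hx⟩, hsx x hx⟩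
      rw [← hTU, hf] at this
      simp only [Set.mem_iUnion] at this ⊢
      obtain ⟨i, ⟨k, hk⟩, hxi⟩ := this
      exact ⟨k, show x ∈ s ↑(f k) by rw [hk]; exact hxi⟩
  -- disjointify
  set W : ℕ → Set (EuclideanSpace ℝ (Fin n)) := disjointed V with hW
  have hWV : ∀ k, W k ⊆ V k := fun k => disjointed_subset V k
  have hWmeas : ∀ k, MeasurableSet (W k) :=
    MeasurableSet.disjointed (fun k => (hVopen k).measurableSet)
  have hWdisj : Pairwise (Function.onFun Disjoint W) := disjoint_disjointed V
  have hWU : ⋃ k, W k = A := by rw [hW, iUnion_disjointed, hVU]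
  have hWderiv : ∀ k, ∀ x ∈ W k, HasFDerivWithinAt Φ (fderiv ℝ Φ x) (W k) x :=
    fun k x hx => (hΦdiff x (hAsub (hVA k (hWV k hx)))).hasFDerivWithinAt
  have hWinj : ∀ k, Set.InjOn Φ (W k) := fun k => (hVinj k).mono (hWV k)
  -- images
  set B : ℕ → Set (EuclideanSpace ℝ (Fin n)) := fun k => Φ '' W k with hB
  have hBmeas : ∀ k, MeasurableSet (B k) := fun k =>
    measurable_image_of_fderivWithin (hWmeas k) (hWderiv k) (hWinj k)
  calc ∫⁻ z in A, g (Φ z) * ENNReal.ofReal |(fderiv ℝ Φ z).det|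
      = ∑' k, ∫⁻ z in W k, g (Φ z) * ENNReal.ofReal |(fderiv ℝ Φ z).det| := by
        rw [← hWU, lintegral_iUnion hWmeas hWdisj]
    _ = ∑' k, ∫⁻ y in B k, g y := by
        refine tsum_congr fun k => ?_
        rw [hB, lintegral_image_eq_lintegral_abs_det_fderiv_mul volume (hWmeas k)
          (hWderiv k) (hWinj k) g]
        simp_rw [mul_comm]
    _ = ∑' k, ∫⁻ y, (B k).indicator g y := by
        refine tsum_congr fun k => ?_
        rw [lintegral_indicator (hBmeas k)]
    _ = ∫⁻ y, ∑' k, (B k).indicator g y :=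
        (lintegral_tsum fun k => (hg.indicator (hBmeas k)).aemeasurable).symm
    _ = ∫⁻ y, g y * ((Φ ⁻¹' {y} ∩ A).encard : ℝ≥0∞) := by
        refine lintegral_congr fun y => ?_
        set P : ℕ → Set (EuclideanSpace ℝ (Fin n)) := fun k => Φ ⁻¹' {y} ∩ W k with hP
        have hPsub : ∀ k, (P k).Subsingleton := by
          intro k a ha b hb
          exact hWinj k ha.2 hb.2 (ha.1.trans hb.1.symm)
        have hPmeas : ∀ k, MeasurableSet (P k) := fun k => (hPsub k).measurableSet
        have hPdisj : Pairwise (Function.onFun Disjoint P) := fun i j hij =>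
          ((hWdisj hij).mono Set.inter_subset_right Set.inter_subset_right)
        have hPU : Φ ⁻¹' {y} ∩ A = ⋃ k, P k := by
          rw [← hWU, Set.inter_iUnion]
        have hPind : ∀ k, ((P k).encard : ℝ≥0∞) = (B k).indicator (fun _ => 1) y := by
          intro k
          by_cases hy : y ∈ B k
          · obtain ⟨x, hxW, hxy⟩ := hy
            have hy' : y ∈ B k := ⟨x, hxW, hxy⟩
            have : P k = {x} := by
              ext z
              constructor
              · intro hz
                exact hWinj k hz.2 hxW (hz.1.trans hxy.symm)
              · rintro rfl
                exact ⟨hxy, hxW⟩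
            rw [this, Set.indicator_of_mem hy']
            simp
          · have : P k = ∅ := by
              ext z
              simp only [Set.mem_empty_iff_false, iff_false]
              rintro ⟨hz1, hz2⟩
              exact hy ⟨z, hz2, hz1⟩
            rw [this, Set.indicator_of_notMem hy]
            simp
        have hcount : ∀ (t : Set (EuclideanSpace ℝ (Fin n))), MeasurableSet t →
            (Measure.count t : ℝ≥0∞) = (t.encard : ℝ≥0∞) := by
          intro t ht
          rw [Measure.count_apply ht]
        have henc : ((Φ ⁻¹' {y} ∩ A).encard : ℝ≥0∞) = ∑' k, ((P k).encard : ℝ≥0∞) := by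
          rw [← hcount _ (by rw [hPU]; exact MeasurableSet.iUnion hPmeas), hPU,
            measure_iUnion hPdisj hPmeas]
          exact tsum_congr fun k => hcount _ (hPmeas k)
        calc ∑' k, (B k).indicator g y
            = ∑' k, g y * (B k).indicator (fun _ => (1 : ℝ≥0∞)) y := by
              refine tsum_congr fun k => ?_
              by_cases hy : y ∈ B k
              · rw [Set.indicator_of_mem hy, Set.indicator_of_mem hy, mul_one]
              · rw [Set.indicator_of_notMem hy, Set.indicator_of_notMem hy, mul_zero]
          _ = g y * ∑' k, (B k).indicator (fun _ => (1 : ℝ≥0∞)) y := ENNReal.tsum_mul_left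
          _ = g y * ((Φ ⁻¹' {y} ∩ A).encard : ℝ≥0∞) := by
              rw [henc]
              congr 1
              exact (tsum_congr fun k => hPind k).symm
end

section
/- Let n ≥ 1, let U ⊆ ℝⁿ be an open set, and let Φ : ℝⁿ → ℝⁿ be continuously differentiable on U. Assume that for every z ∈ U the preimage Φ⁻¹({Φ(z)}) ∩ U is a finite set, and let N(z) ≥ 1 denote its cardinality. Let F : ℝⁿ → ℂ be such that F is integrable on the image Φ(U) and the function z ↦ F(Φ(z)) · |det DΦ(z)| / N(z) is integrable on U. Then for every x ∈ ℝⁿ, ∫_{Φ(U)} F(y) e^{i x·y} dy = ∫_U e^{i Φ(z)·x} F(Φ(z)) · |det DΦ(z)| / N(z) dz. -/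
open MeasureTheory Set

theorem area_aux {E : Type*} [NormedAddCommGroup E] [NormedSpace ℝ E] [FiniteDimensional ℝ E]
    [MeasurableSpace E] [BorelSpace E]
    (μ : Measure E) [μ.IsAddHaarMeasure]
    (U : Set E) (hU : IsOpen U) (Φ : E → E) (hΦ : ContDiffOn ℝ 1 Φ U)
    (hfin : ∀ z ∈ U, (Φ ⁻¹' {Φ z} ∩ U).Finite)
    (hcard : ∀ z ∈ U, 1 ≤ (Φ ⁻¹' {Φ z} ∩ U).ncard)
    (f : E → ℂ)
    (hint : IntegrableOn (fun z =>
      (|(fderiv ℝ Φ z).det| / ((Φ ⁻¹' {Φ z} ∩ U).ncard : ℝ)) • f (Φ z)) U μ) :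
    ∫ y in Φ '' U, f y ∂μ
      = ∫ z in U, (|(fderiv ℝ Φ z).det| / ((Φ ⁻¹' {Φ z} ∩ U).ncard : ℝ)) • f (Φ z) ∂μ := by
  classical
  set G : E → ℂ :=
    fun z => (|(fderiv ℝ Φ z).det| / ((Φ ⁻¹' {Φ z} ∩ U).ncard : ℝ)) • f (Φ z) with hGdef
  set g : E → ℂ := fun y => (((Φ ⁻¹' {y} ∩ U).ncard : ℝ))⁻¹ • f y with hgdef
  have hdiff : ∀ z ∈ U, HasFDerivAt Φ (fderiv ℝ Φ z) z := fun z hz =>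
    ((hΦ.contDiffAt (hU.mem_nhds hz)).differentiableAt one_ne_zero).hasFDerivAt
  set V : Set E := U ∩ (fun z => (fderiv ℝ Φ z).det) ⁻¹' ({0}ᶜ) with hVdef
  have hVU : V ⊆ U := inter_subset_left
  have hVopen : IsOpen V := by
    have h1 : ContinuousOn (fun z => (fderiv ℝ Φ z).det) U :=
      ContinuousLinearMap.continuous_det.comp_continuousOn
        (hΦ.continuousOn_fderiv_of_isOpen hU le_rfl)
    exact h1.isOpen_inter_preimage hU isOpen_compl_singleton
  have hCdet : ∀ z ∈ U \ V, (fderiv ℝ Φ z).det = 0 := by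
    intro z hz
    by_contra h
    exact hz.2 ⟨hz.1, h⟩
  have hCnull : μ (Φ '' (U \ V)) = 0 := by
    apply addHaar_image_eq_zero_of_det_fderivWithin_eq_zero μ
      (f' := fun z => fderiv ℝ Φ z)
      (fun z hz => (hdiff z hz.1).hasFDerivWithinAt) hCdet
  have hGzero : ∀ z ∈ U \ V, G z = 0 := by
    intro z hz
    simp [hGdef, hCdet z hz]
  -- local injectivity
  have key : ∀ z : V, ∃ t : Set E, IsOpen t ∧ (z : E) ∈ t ∧ t ⊆ V ∧ InjOn Φ t := by
    rintro ⟨z, hzU, hzdet⟩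
    have hca : ContDiffAt ℝ 1 Φ z := hΦ.contDiffAt (hU.mem_nhds hzU)
    have hdet' : LinearMap.det ((fderiv ℝ Φ z) : E →ₗ[ℝ] E) ≠ 0 := hzdet
    let e : E ≃L[ℝ] E :=
      (LinearMap.equivOfDetNeZero ((fderiv ℝ Φ z) : E →ₗ[ℝ] E) hdet').toContinuousLinearEquiv
    have he : (e : E →L[ℝ] E) = fderiv ℝ Φ z := by
      ext v
      rfl
    have hs : HasStrictFDerivAt Φ (e : E →L[ℝ] E) z := by
      rw [he]; exact hca.hasStrictFDerivAt one_ne_zero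
    refine ⟨(hs.toOpenPartialHomeomorph Φ).source ∩ V,
      ((hs.toOpenPartialHomeomorph Φ).open_source).inter hVopen,
      ⟨hs.mem_toOpenPartialHomeomorph_source, ⟨hzU, hzdet⟩⟩, inter_subset_right, ?_⟩
    have h := (hs.toOpenPartialHomeomorph Φ).injOn
    rw [hs.toOpenPartialHomeomorph_coe] at h
    exact h.mono inter_subset_left
  choose t htopen htmem htsub htinj using key
  obtain ⟨T, hTc, hTU⟩ := TopologicalSpace.isOpen_iUnion_countable t htopen
  have hTV : ⋃ z ∈ T, t z = V := by
    rw [hTU]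
    refine subset_antisymm (iUnion_subset fun z => htsub z) fun w hw => ?_
    exact mem_iUnion.2 ⟨⟨w, hw⟩, htmem _⟩
  by_cases hVne : V.Nonempty
  swap
  · -- V empty
    rw [not_nonempty_iff_eq_empty] at hVne
    have hUC : U \ V = U := by rw [hVne, diff_empty]
    have h1 : μ (Φ '' U) = 0 := by rw [← hUC]; exact hCnull
    have h2 : ∫ z in U, G z ∂μ = 0 := by
      rw [setIntegral_congr_fun hU.measurableSet
        (fun z hz => hGzero z (hUC.symm ▸ hz))]
      simp
    rw [h2, Measure.restrict_eq_zero.2 h1, integral_zero_measure]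
  obtain ⟨e, hrange⟩ := hTc.exists_eq_range (by
    obtain ⟨z, hz⟩ := hVne
    rcases eq_empty_or_nonempty T with h | h
    · rw [h] at hTV; simp at hTV; rw [← hTV] at hz; exact absurd hz (notMem_empty z)
    · exact h)
  set B : ℕ → Set E := fun k => t (e k) with hBdef
  have hBV : ⋃ k, B k = V := by
    rw [← hTV, hrange, biUnion_range]
  have hBinj : ∀ k, InjOn Φ (B k) := fun k => htinj _
  have hBsub : ∀ k, B k ⊆ V := fun k => htsub _
  set A : ℕ → Set E := disjointed B with hAdef
  have hAmeas : ∀ k, MeasurableSet (A k) :=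
    MeasurableSet.disjointed (fun k => (htopen (e k)).measurableSet)
  have hAdis : Pairwise (Function.onFun Disjoint A) := disjoint_disjointed B
  have hAsub : ∀ k, A k ⊆ B k := disjointed_subset B
  have hAV : ⋃ k, A k = V := by rw [hAdef, iUnion_disjointed]; exact hBV
  have hAU : ∀ k, A k ⊆ U := fun k => (hAsub k).trans ((hBsub k).trans hVU)
  have hAinj : ∀ k, InjOn Φ (A k) := fun k => (hBinj k).mono (hAsub k)
  have hAderiv : ∀ k, ∀ z ∈ A k, HasFDerivWithinAt Φ (fderiv ℝ Φ z) (A k) z :=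
    fun k z hz => (hdiff z (hAU k hz)).hasFDerivWithinAt
  have himeas : ∀ k, MeasurableSet (Φ '' A k) :=
    fun k => measurable_image_of_fderivWithin (hAmeas k) (hAderiv k) (hAinj k)
  have hGg : G = fun z => |(fderiv ℝ Φ z).det| • g (Φ z) := by
    funext z
    simp only [hGdef, hgdef, smul_smul, div_eq_mul_inv]
  have hGintA : ∀ k, IntegrableOn G (A k) μ := fun k => hint.mono_set (hAU k)
  have hgintIm : ∀ k, IntegrableOn g (Φ '' A k) μ := by
    intro k
    rw [integrableOn_image_iff_integrableOn_abs_det_fderiv_smul μ (hAmeas k) (hAderiv k)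
      (hAinj k) g]
    have := hGintA k
    rwa [hGg] at this
  have hcov : ∀ k, ∫ z in A k, G z ∂μ = ∫ y, (Φ '' A k).indicator g y ∂μ := by
    intro k
    rw [integral_indicator (himeas k),
      integral_image_eq_integral_abs_det_fderiv_smul μ (hAmeas k) (hAderiv k) (hAinj k) g,
      hGg]
  -- split U
  have hUsplit : ∫ z in U, G z ∂μ = ∫ z in V, G z ∂μ := by
    have hUVC : V ∪ (U \ V) = U := union_diff_cancel hVU
    rw [← hUVC, setIntegral_union disjoint_sdiff_right
      (hU.measurableSet.diff hVopen.measurableSet)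
      (hint.mono_set hVU) (hint.mono_set diff_subset),
      setIntegral_congr_fun (hU.measurableSet.diff hVopen.measurableSet) hGzero]
    simp
  have hVsplit : ∫ z in V, G z ∂μ = ∑' k, ∫ z in A k, G z ∂μ := by
    rw [← hAV]
    exact integral_iUnion hAmeas hAdis (by rw [hAV]; exact hint.mono_set hVU)
  -- tsum over indicators
  have hmeas_ind : ∀ k, AEStronglyMeasurable ((Φ '' A k).indicator g) μ :=
    fun k => (aestronglyMeasurable_indicator_iff (himeas k)).2 (hgintIm k).aestronglyMeasurable
  have hnorm : ∀ z, (‖G z‖₊ : ENNReal)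
      = ENNReal.ofReal |(fderiv ℝ Φ z).det| * (‖g (Φ z)‖₊ : ENNReal) := by
    intro z
    rw [hGg]
    simp only [nnnorm_smul]
    rw [ENNReal.coe_mul, ← enorm_eq_nnnorm, Real.enorm_eq_ofReal (abs_nonneg _)]
  have hlint : ∑' k, ∫⁻ y, ‖(Φ '' A k).indicator g y‖₊ ∂μ ≠ ⊤ := by
    have heq : ∀ k, ∫⁻ y, ‖(Φ '' A k).indicator g y‖₊ ∂μ = ∫⁻ z in A k, ‖G z‖₊ ∂μ := by
      intro k
      have h1 : (fun y => (‖(Φ '' A k).indicator g y‖₊ : ENNReal))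
          = (Φ '' A k).indicator (fun y => (‖g y‖₊ : ENNReal)) := by
        funext y
        by_cases h : y ∈ Φ '' A k <;> simp [Set.indicator_apply, h]
      rw [h1, lintegral_indicator (himeas k),
        lintegral_image_eq_lintegral_abs_det_fderiv_mul μ (hAmeas k) (hAderiv k) (hAinj k)
          (fun y => (‖g y‖₊ : ENNReal))]
      exact lintegral_congr fun z => (hnorm z).symm
    have h2 : ∑' k, ∫⁻ z in A k, (‖G z‖₊ : ENNReal) ∂μ = ∫⁻ z in V, ‖G z‖₊ ∂μ := by
      rw [← hAV, lintegral_iUnion hAmeas hAdis]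
    have h3 : ∫⁻ z in V, (‖G z‖₊ : ENNReal) ∂μ < ⊤ :=
      lt_of_le_of_lt (lintegral_mono_set hVU) hint.2
    simp only [heq, h2]
    exact h3.ne
  -- a.e. pointwise identity
  have hae0 : ∀ᵐ y ∂μ, y ∉ Φ '' (U \ V) := measure_eq_zero_iff_ae_notMem.1 hCnull
  have hae : ∀ᵐ y ∂μ, (∑' k, (Φ '' A k).indicator g y) = (Φ '' V).indicator f y := by
    filter_upwards [hae0] with y hy
    by_cases hyV : y ∈ Φ '' V
    · obtain ⟨z₀, hz₀V, hz₀⟩ := id hyV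
      have hz₀U : z₀ ∈ U := hVU hz₀V
      have hSfin : (Φ ⁻¹' {y} ∩ U).Finite := hz₀ ▸ hfin z₀ hz₀U
      have hScard : 1 ≤ (Φ ⁻¹' {y} ∩ U).ncard := hz₀ ▸ hcard z₀ hz₀U
      have hSV : (Φ ⁻¹' {y} ∩ U) ⊆ V := by
        intro w hw
        by_contra hwV
        exact hy ⟨w, ⟨hw.2, hwV⟩, hw.1⟩
      have hex : ∀ w : (Φ ⁻¹' {y} ∩ U : Set E), ∃! k, (w : E) ∈ A k := by
        intro w
        have hwV : (w : E) ∈ ⋃ k, A k := hAV.symm ▸ hSV w.2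
        obtain ⟨k, hk⟩ := mem_iUnion.1 hwV
        refine ⟨k, hk, fun j hj => ?_⟩
        by_contra hne
        exact (hAdis hne).le_bot ⟨hj, hk⟩
      choose κ hκ hκu using hex
      have hκinj : Function.Injective κ := by
        intro w w' hww
        have h1 : (w : E) ∈ A (κ w) := hκ w
        have h2 : (w' : E) ∈ A (κ w) := hww ▸ hκ w'
        refine Subtype.ext (hAinj (κ w) h1 h2 ?_)
        have hw1 : Φ (w : E) = y := w.2.1
        have hw2 : Φ (w' : E) = y := w'.2.1
        rw [hw1, hw2]
      have hKrange : {k | y ∈ Φ '' A k} = Set.range κ := by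
        ext k
        constructor
        · rintro ⟨w, hwA, hwy⟩
          have hwS : w ∈ Φ ⁻¹' {y} ∩ U := ⟨hwy, hAU k hwA⟩
          exact ⟨⟨w, hwS⟩, (hκu ⟨w, hwS⟩ k hwA).symm⟩
        · rintro ⟨w, rfl⟩
          exact ⟨(w : E), hκ w, w.2.1⟩
      have hKfin : {k | y ∈ Φ '' A k}.Finite := by
        rw [hKrange]
        have : Finite (Φ ⁻¹' {y} ∩ U : Set E) := hSfin
        exact Set.finite_range κ
      have hKcard : {k | y ∈ Φ '' A k}.ncard = (Φ ⁻¹' {y} ∩ U).ncard := by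
        have : Finite (Φ ⁻¹' {y} ∩ U : Set E) := hSfin
        rw [hKrange, ← Nat.card_coe_set_eq, Nat.card_range_of_injective hκinj,
          Nat.card_coe_set_eq]
      have hN0 : ((Φ ⁻¹' {y} ∩ U).ncard : ℝ) ≠ 0 := by
        exact_mod_cast (Nat.one_le_iff_ne_zero.1 hScard)
      calc ∑' k, (Φ '' A k).indicator g y
          = ∑' k, ({k | y ∈ Φ '' A k}).indicator (fun _ => g y) k := by
            refine tsum_congr fun k => ?_
            by_cases h : y ∈ Φ '' A k
            · rw [Set.indicator_of_mem h g,
                Set.indicator_of_mem (show k ∈ {k | y ∈ Φ '' A k} from h)]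
            · rw [Set.indicator_of_notMem h g,
                Set.indicator_of_notMem (show k ∉ {k | y ∈ Φ '' A k} from h)]
        _ = ∑ k ∈ hKfin.toFinset, ({k | y ∈ Φ '' A k}).indicator (fun _ => g y) k := by
            apply tsum_eq_sum
            intro k hk
            rw [Set.Finite.mem_toFinset] at hk
            exact Set.indicator_of_notMem hk _
        _ = hKfin.toFinset.card • g y := by
            rw [← Finset.sum_const]
            refine Finset.sum_congr rfl fun k hk => ?_
            rw [Set.Finite.mem_toFinset] at hk
            exact Set.indicator_of_mem hk _
        _ = f y := by
            rw [← Set.ncard_eq_toFinset_card _ hKfin, hKcard, hgdef]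
            simp only []
            rw [← Nat.cast_smul_eq_nsmul ℝ, smul_smul, mul_inv_cancel₀ hN0, one_smul]
        _ = (Φ '' V).indicator f y := (Set.indicator_of_mem hyV f).symm
    · have h0 : ∀ k, (Φ '' A k).indicator g y = 0 := fun k =>
        Set.indicator_of_notMem
          (fun h => hyV (image_mono ((hAsub k).trans (hBsub k)) h)) g
      rw [tsum_congr h0, tsum_zero, Set.indicator_of_notMem hyV]
  have hVmeas' : MeasurableSet (Φ '' V) := by
    rw [← hAV, image_iUnion]; exact MeasurableSet.iUnion himeas
  have himgae : Φ '' V =ᵐ[μ] Φ '' U := by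
    rw [ae_eq_set]
    constructor
    · have h : Φ '' V \ Φ '' U = ∅ := diff_eq_empty.2 (image_mono hVU)
      simp [h]
    · refine measure_mono_null ?_ hCnull
      rintro y ⟨⟨w, hwU, rfl⟩, hnot⟩
      by_cases hwV : w ∈ V
      · exact absurd ⟨w, hwV, rfl⟩ hnot
      · exact ⟨w, ⟨hwU, hwV⟩, rfl⟩
  calc ∫ y in Φ '' U, f y ∂μ
      = ∫ y in Φ '' V, f y ∂μ := setIntegral_congr_set himgae.symm
    _ = ∫ y, (Φ '' V).indicator f y ∂μ := (integral_indicator hVmeas').symm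
    _ = ∫ y, ∑' k, (Φ '' A k).indicator g y ∂μ := (integral_congr_ae hae).symm
    _ = ∑' k, ∫ y, (Φ '' A k).indicator g y ∂μ := integral_tsum hmeas_ind hlint
    _ = ∑' k, ∫ z in A k, G z ∂μ := tsum_congr fun k => (hcov k).symm
    _ = ∫ z in V, G z ∂μ := hVsplit.symm
    _ = ∫ z in U, G z ∂μ := hUsplit.symm

theorem stmt9 (n : ℕ) (hn : 1 ≤ n)
    (U : Set (EuclideanSpace ℝ (Fin n))) (hU : IsOpen U)
    (Φ : EuclideanSpace ℝ (Fin n) → EuclideanSpace ℝ (Fin n))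
    (hΦ : ContDiffOn ℝ 1 Φ U)
    (hfin : ∀ z ∈ U, (Φ ⁻¹' {Φ z} ∩ U).Finite)
    (hcard : ∀ z ∈ U, 1 ≤ (Φ ⁻¹' {Φ z} ∩ U).ncard)
    (F : EuclideanSpace ℝ (Fin n) → ℂ)
    (hF : IntegrableOn F (Φ '' U))
    (hint : IntegrableOn (fun z =>
      F (Φ z) * ((|(fderiv ℝ Φ z).det| / ((Φ ⁻¹' {Φ z} ∩ U).ncard : ℝ) : ℝ) : ℂ)) U)
    (x : EuclideanSpace ℝ (Fin n)) :
    ∫ y in Φ '' U, F y * Complex.exp (Complex.I * ((inner ℝ x y : ℝ) : ℂ)) =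
      ∫ z in U, Complex.exp (Complex.I * ((inner ℝ (Φ z) x : ℝ) : ℂ)) * F (Φ z) *
        ((|(fderiv ℝ Φ z).det| / ((Φ ⁻¹' {Φ z} ∩ U).ncard : ℝ) : ℝ) : ℂ) := by
  have hexpc : Continuous fun y : EuclideanSpace ℝ (Fin n) =>
      Complex.exp (Complex.I * ((inner ℝ x y : ℝ) : ℂ)) :=
    Complex.continuous_exp.comp (continuous_const.mul
      (Complex.continuous_ofReal.comp (continuous_const.inner continuous_id)))
  have hexpm : AEStronglyMeasurable
      (fun z => Complex.exp (Complex.I * ((inner ℝ x (Φ z) : ℝ) : ℂ)))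
      (volume.restrict U) :=
    ((hexpc.comp_continuousOn hΦ.continuousOn)).aestronglyMeasurable hU.measurableSet
  have hbd : ∀ z : EuclideanSpace ℝ (Fin n),
      ‖Complex.exp (Complex.I * ((inner ℝ x (Φ z) : ℝ) : ℂ))‖ ≤ 1 := by
    intro z
    rw [Complex.norm_exp]
    simp
  have hint' : IntegrableOn (fun z =>
      (|(fderiv ℝ Φ z).det| / ((Φ ⁻¹' {Φ z} ∩ U).ncard : ℝ)) •
        (F (Φ z) * Complex.exp (Complex.I * ((inner ℝ x (Φ z) : ℝ) : ℂ)))) U := by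
    have h := hint.bdd_mul (c := 1) hexpm (Filter.Eventually.of_forall hbd)
    refine h.congr (Filter.Eventually.of_forall fun z => ?_)
    simp only [Complex.real_smul]
    ring
  have h := area_aux volume U hU Φ hΦ hfin hcard
    (fun y => F y * Complex.exp (Complex.I * ((inner ℝ x y : ℝ) : ℂ))) hint'
  rw [h]
  refine setIntegral_congr_fun hU.measurableSet fun z _ => ?_
  simp only [Complex.real_smul, real_inner_comm (Φ z) x]
  ring
end
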